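/- Let ℓ_i ≤ u_i be real numbers for i = 1,…,n, let D_n = {x ∈ ℝ^n : x_i ∈ [ℓ_i, u_i] for all i}, and let f_i : D_n → ℝ be continuous for each i. If for every i and every x ∈ D_n one has f_i(x_{−i}, ℓ_i) ≥ 0 and f_i(x_{−i}, u_i) ≤ 0 (where (x_{−i}, c) denotes x with its i-th coordinate replaced by c), then there exists x* ∈ D_n with f_i(x*) = 0 for all i = 1,…,n. -/

import Mathlib

open Finset

namespace KuhnPM



variable {α β : Type*} [DecidableEq α] [DecidableEq β]

/-- A finset admitting a fixed-point-free involution has even cardinality. -/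
lemma even_card_of_involution (s : Finset α) (ι : α → α)
    (hmem : ∀ a ∈ s, ι a ∈ s) (hinv : ∀ a ∈ s, ι (ι a) = a) (hne : ∀ a ∈ s, ι a ≠ a) :
    Even s.card := by
  classical
  induction s using Finset.strongInduction with
  | _ s IH =>
    rcases s.eq_empty_or_nonempty with rfl | ⟨a, ha⟩
    · simp
    · have hιa : ι a ∈ s := hmem a ha
      have hne' : ι a ≠ a := hne a ha
      set s' := (s.erase a).erase (ι a) with hs'
      have hss : s' ⊂ s := by
        refine Finset.ssubset_of_subset_of_ssubset ?_ (Finset.erase_ssubset ha)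
        exact Finset.erase_subset _ _
      have hmem' : ∀ x ∈ s', x ∈ s := fun x hx =>
        Finset.mem_of_mem_erase (Finset.mem_of_mem_erase hx)
      have key : ∀ x ∈ s', ι x ∈ s' := by
        intro x hx
        have hxs := hmem' x hx
        have hxa : x ≠ a := by
          have := Finset.mem_of_mem_erase hx
          exact Finset.ne_of_mem_erase this
        have hxia : x ≠ ι a := Finset.ne_of_mem_erase hx
        refine Finset.mem_erase.2 ⟨?_, Finset.mem_erase.2 ⟨?_, hmem x hxs⟩⟩
        · intro h; apply hxa; rw [← hinv a ha, ← h, hinv x hxs]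
        · intro h; exact hxia (by rw [← h, hinv x hxs])
      have heven : Even s'.card :=
        IH s' hss (fun x hx => key x hx) (fun x hx => hinv x (hmem' x hx))
          (fun x hx => hne x (hmem' x hx))
      have hcard : s.card = s'.card + 2 := by
        rw [hs', Finset.card_erase_of_mem, Finset.card_erase_of_mem ha]
        · have h1 : 1 ≤ s.card := Finset.card_pos.2 ⟨a, ha⟩
          have h2 : 2 ≤ s.card := Finset.one_lt_card.2 ⟨a, ha, ι a, hιa, fun h => hne' h.symm⟩
          omega
        · exact Finset.mem_erase.2 ⟨hne', hιa⟩
      rw [hcard]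
      exact heven.add (by norm_num)

variable [Fintype β]

/-- Per-simplex parity: the number of "doors" (sub-facets labelled with everything
except `z`) is odd iff the simplex is fully labelled. -/
lemma door_parity (s : Finset α) (g : α → β) (z : β)
    (hcard : s.card = Fintype.card β) :
    (s.filter (fun k => (s.erase k).image g = univ.erase z)).card % 2
      = if s.image g = univ then 1 else 0 := by
  classical
  by_cases h : s.image g = univ
  · -- injective case
    have hinj : Set.InjOn g s := by
      apply Finset.injOn_of_card_image_eq
      rw [h, hcard, Finset.card_univ]
    have hiff : ∀ k ∈ s, ((s.erase k).image g = univ.erase z ↔ g k = z) := by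
      intro k hk
      have himg : (s.erase k).image g = (s.image g).erase (g k) := by
        ext y
        simp only [Finset.mem_image, Finset.mem_erase]
        constructor
        · rintro ⟨j, ⟨hjk, hjs⟩, rfl⟩
          exact ⟨fun hgj => hjk (hinj hjs hk hgj), j, hjs, rfl⟩
        · rintro ⟨hyk, j, hjs, rfl⟩
          exact ⟨j, ⟨fun hjk => hyk (by rw [hjk]), hjs⟩, rfl⟩
      rw [himg, h]
      exact Finset.erase_inj univ (Finset.mem_univ (g k))
    rw [Finset.filter_congr hiff, if_pos h]
    have hz : z ∈ s.image g := by rw [h]; exact Finset.mem_univ z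
    obtain ⟨k₀, hk₀, hgk₀⟩ := Finset.mem_image.1 hz
    have : s.filter (fun k => g k = z) = {k₀} := by
      ext k
      simp only [Finset.mem_filter, Finset.mem_singleton]
      constructor
      · rintro ⟨hks, hgk⟩; exact hinj hks hk₀ (by rw [hgk, hgk₀])
      · rintro rfl; exact ⟨hk₀, hgk₀⟩
    rw [this]; simp
  · rw [if_neg h]
    by_cases hd : ∃ k ∈ s, (s.erase k).image g = univ.erase z
    · obtain ⟨k₀, hk₀s, hk₀⟩ := hd
      -- the image of g is exactly univ.erase z
      have himg : s.image g = univ.erase z := by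
        apply Finset.Subset.antisymm
        · intro y hy
          by_cases hyz : y = z
          · exfalso; apply h
            apply Finset.eq_univ_of_forall
            intro w
            by_cases hwy : w = y
            · rw [hwy]; exact hy
            · have hw : w ∈ univ.erase z :=
                Finset.mem_erase.2 ⟨fun hh => hwy (hh.trans hyz.symm), Finset.mem_univ w⟩
              rw [← hk₀] at hw
              exact Finset.image_subset_image (Finset.erase_subset _ _) hw
          · exact Finset.mem_erase.2 ⟨hyz, Finset.mem_univ y⟩
        · rw [← hk₀]
          exact Finset.image_subset_image (Finset.erase_subset _ _)
      have hz : z ∉ s.image g := by rw [himg]; simp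
      set t : β → ℕ := fun y => (s.filter (fun a => g a = y)).card with ht
      have hsum : ∑ y ∈ univ.erase z, t y = Fintype.card β := by
        rw [← hcard, eq_comm]
        apply Finset.card_eq_sum_card_fiberwise
        intro x hx
        refine Finset.mem_erase.2 ⟨?_, Finset.mem_univ _⟩
        intro hgx; exact hz (by rw [← hgx]; exact Finset.mem_image_of_mem g hx)
      have ht1 : ∀ y ∈ univ.erase z, 1 ≤ t y := by
        intro y hy
        rw [← himg] at hy
        obtain ⟨j, hj, hgj⟩ := Finset.mem_image.1 hy
        exact Finset.card_pos.2 ⟨j, Finset.mem_filter.2 ⟨hj, hgj⟩⟩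
      set B := (univ.erase z).filter (fun y => 2 ≤ t y) with hB
      have hcardsplit : ∑ y ∈ B, t y + ∑ y ∈ (univ.erase z).filter (fun y => ¬ 2 ≤ t y), t y
          = Fintype.card β := by
        rw [hB, Finset.sum_filter_add_sum_filter_not, hsum]
      have hones : ∑ y ∈ (univ.erase z).filter (fun y => ¬ 2 ≤ t y), t y
          = ((univ.erase z).filter (fun y => ¬ 2 ≤ t y)).card := by
        rw [Finset.card_eq_sum_ones]
        apply Finset.sum_congr rfl
        intro y hy
        obtain ⟨hy1, hy2⟩ := Finset.mem_filter.1 hy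
        have := ht1 y hy1
        omega
      have hsplit2 : B.card + ((univ.erase z).filter (fun y => ¬ 2 ≤ t y)).card
          = (univ.erase z).card := Finset.card_filter_add_card_filter_not _
      have herasecard : (univ.erase z).card = Fintype.card β - 1 := by
        rw [Finset.card_erase_of_mem (Finset.mem_univ z), Finset.card_univ]
      have hpos : 1 ≤ Fintype.card β := by
        rw [← Finset.card_univ]
        exact Finset.card_pos.2 ⟨z, Finset.mem_univ z⟩
      have hBsum : ∑ y ∈ B, t y = B.card + 1 := by omega
      have hBle : 2 * B.card ≤ ∑ y ∈ B, t y := by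
        calc 2 * B.card = ∑ _y ∈ B, 2 := by rw [Finset.sum_const, smul_eq_mul, mul_comm]
        _ ≤ ∑ y ∈ B, t y := Finset.sum_le_sum (fun y hy => (Finset.mem_filter.1 hy).2)
      have hBcard : B.card = 1 := by
        rcases Nat.eq_zero_or_pos B.card with h0 | h1
        · exfalso
          rw [Finset.card_eq_zero.1 h0, Finset.sum_empty] at hBsum
          omega
        · omega
      obtain ⟨y₀, hy₀⟩ := Finset.card_eq_one.1 hBcard
      have hty₀ : t y₀ = 2 := by
        have := hBsum
        rw [hy₀, Finset.sum_singleton, Finset.card_singleton] at this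
        omega
      have hy₀B : y₀ ∈ B := by rw [hy₀]; exact Finset.mem_singleton_self y₀
      have hy₀z : y₀ ∈ univ.erase z := (Finset.mem_filter.1 hy₀B).1
      -- characterise the doors
      have hiff : ∀ k ∈ s, ((s.erase k).image g = univ.erase z ↔ g k = y₀) := by
        intro k hk
        constructor
        · intro hdoor
          -- g k has another preimage, hence its fiber has size ≥ 2, hence g k = y₀
          have hgk : g k ∈ (s.erase k).image g := by
            rw [hdoor, ← himg]
            exact Finset.mem_image_of_mem g hk
          obtain ⟨j, hj, hgj⟩ := Finset.mem_image.1 hgk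
          obtain ⟨hjk, hjs⟩ := Finset.mem_erase.1 hj
          have h2 : 2 ≤ t (g k) := by
            have hsub : ({j, k} : Finset α) ⊆ s.filter (fun a => g a = g k) := by
              intro w hw
              rcases Finset.mem_insert.1 hw with rfl | hw
              · exact Finset.mem_filter.2 ⟨hjs, hgj⟩
              · rw [Finset.mem_singleton.1 hw]
                exact Finset.mem_filter.2 ⟨hk, rfl⟩
            have : ({j, k} : Finset α).card = 2 := Finset.card_pair hjk
            calc 2 = ({j, k} : Finset α).card := this.symm
            _ ≤ _ := Finset.card_le_card hsub
          have hgkz : g k ∈ univ.erase z := by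
            rw [← himg]; exact Finset.mem_image_of_mem g hk
          have : g k ∈ B := Finset.mem_filter.2 ⟨hgkz, h2⟩
          rw [hy₀] at this
          exact Finset.mem_singleton.1 this
        · intro hgky₀
          apply Finset.Subset.antisymm
          · rw [← himg]
            exact Finset.image_subset_image (Finset.erase_subset _ _)
          · intro y hy
            rw [← himg] at hy
            obtain ⟨j, hjs, hgj⟩ := Finset.mem_image.1 hy
            by_cases hjk : j = k
            · -- y = y₀ ; use the other element of the fiber
              have hyy₀ : y = y₀ := by rw [← hgj, hjk, hgky₀]
              have h2 : 1 < (s.filter (fun a => g a = y₀)).card := by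
                rw [show (s.filter (fun a => g a = y₀)).card = t y₀ from rfl, hty₀]; omega
              obtain ⟨a, ha, b, hb, hab⟩ := Finset.one_lt_card.1 h2
              obtain ⟨has, hga⟩ := Finset.mem_filter.1 ha
              obtain ⟨hbs, hgb⟩ := Finset.mem_filter.1 hb
              by_cases hak : a = k
              · refine Finset.mem_image.2 ⟨b, Finset.mem_erase.2 ⟨?_, hbs⟩, by rw [hgb, ← hyy₀]⟩
                intro hbk; exact hab (by rw [hak, hbk])
              · exact Finset.mem_image.2 ⟨a, Finset.mem_erase.2 ⟨hak, has⟩, by rw [hga, ← hyy₀]⟩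
            · exact Finset.mem_image.2 ⟨j, Finset.mem_erase.2 ⟨hjk, hjs⟩, hgj⟩
      rw [Finset.filter_congr hiff]
      have : (s.filter (fun k => g k = y₀)).card = 2 := hty₀
      rw [this]
    · have : s.filter (fun k => (s.erase k).image g = univ.erase z) = ∅ := by
        rw [Finset.filter_eq_empty_iff]
        intro k hk hdoor
        exact hd ⟨k, hk, hdoor⟩
      rw [this]; simp




/-- `k`-th vertex of the Freudenthal simplex determined by base point `b` and
permutation `π` : it is `b` plus the sum of the first `k` unit vectors `e_{π 0}, …, e_{π (k-1)}`. -/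
def vert {n : ℕ} (N : ℕ) (b : Fin n → Fin N) (π : Equiv.Perm (Fin n)) (k : ℕ) :
    Fin n → ℤ :=
  fun i => (b i : ℤ) + if ((π.symm i : Fin n) : ℕ) < k then 1 else 0

lemma vert_mem_grid {n N : ℕ} (b : Fin n → Fin N) (π : Equiv.Perm (Fin n)) (k : ℕ) :
    ∀ j, 0 ≤ vert N b π k j ∧ vert N b π k j ≤ N := by
  intro j
  have := (b j).isLt
  unfold vert
  split <;> [constructor; constructor] <;> push_cast <;> omega

lemma perm_mul_symm {n : ℕ} (π σ : Equiv.Perm (Fin n)) (i : Fin n) :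
    (π * σ).symm i = σ.symm (π.symm i) := rfl

/-- Pivot across an interior facet, middle case: swapping two adjacent transitions. -/
lemma vert_swap {n N : ℕ} (b : Fin n → Fin N) (π : Equiv.Perm (Fin n)) (k : ℕ)
    (h0 : 0 < k) (hk : k < n) (j : ℕ) (hj : j ≠ k) :
    vert N b (π * Equiv.swap (⟨k-1, by omega⟩ : Fin n) ⟨k, hk⟩) j = vert N b π j := by
  funext i
  set a : Fin n := ⟨k-1, by omega⟩
  set a' : Fin n := ⟨k, hk⟩
  unfold vert
  have hsymm : (π * Equiv.swap a a').symm i = Equiv.swap a a' (π.symm i) := by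
    rw [perm_mul_symm, Equiv.symm_swap]
  rw [hsymm]
  rcases eq_or_ne (π.symm i) a with h | h
  · rw [h, Equiv.swap_apply_left]
    have h1 : ((a' : Fin n) : ℕ) = k := rfl
    have h2 : ((a : Fin n) : ℕ) = k - 1 := rfl
    rw [h1, h2]
    have : k < j ↔ k - 1 < j := by omega
    simp [this]
  · rcases eq_or_ne (π.symm i) a' with h' | h'
    · rw [h', Equiv.swap_apply_right]
      have h1 : ((a' : Fin n) : ℕ) = k := rfl
      have h2 : ((a : Fin n) : ℕ) = k - 1 := rfl
      rw [h1, h2]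
      have : k - 1 < j ↔ k < j := by omega
      simp [this]
    · rw [Equiv.swap_apply_of_ne_of_ne h h']

lemma finRotate_symm_val {n : ℕ} (x : Fin (n+1)) :
    (((finRotate (n+1)).symm x : Fin (n+1)) : ℕ) = if (x : ℕ) = 0 then n else (x : ℕ) - 1 := by
  set s := (finRotate (n+1)).symm x with hs
  have hx : finRotate (n+1) s = x := Equiv.apply_symm_apply _ _
  rw [finRotate_succ_apply] at hx
  have hval : ((s : ℕ) + 1) % (n+1) = (x : ℕ) := by
    rw [← hx]
    simp [Fin.add_def]
  have hslt : (s : ℕ) < n + 1 := s.isLt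
  rcases eq_or_ne (s : ℕ) n with hsn | hsn
  · have hx0 : (x : ℕ) = 0 := by rw [hsn, Nat.mod_self] at hval; omega
    rw [hsn, hx0]
    simp
  · have hlt : (s : ℕ) + 1 < n + 1 := by omega
    rw [Nat.mod_eq_of_lt hlt] at hval
    rw [← hval, if_neg (by omega)]
    omega

/-- Pivot across an interior facet, bottom case: dropping the base vertex.
The facet `{v_1, …, v_n}` of `(b, π)` is the facet `{w_0, …, w_{n-1}}` of
`(b + e_{π 0}, π ∘ rot)`. -/
lemma vert_rot {n N : ℕ} (b : Fin (n+1) → Fin N) (π : Equiv.Perm (Fin (n+1)))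
    (v : Fin N) (hv : (v : ℕ) = (b (π 0) : ℕ) + 1) (j : ℕ) (hj : j ≤ n) :
    vert N (Function.update b (π 0) v) (π * (finRotate (n+1) : Equiv.Perm (Fin (n+1)))) j
      = vert N b π (j+1) := by
  funext i
  unfold vert
  have hsymm : (π * (finRotate (n+1) : Equiv.Perm (Fin (n+1)))).symm i
      = (finRotate (n+1)).symm (π.symm i) := perm_mul_symm _ _ _
  rw [hsymm, Function.update_apply]
  have hiff : i = π 0 ↔ π.symm i = 0 := by
    constructor
    · rintro rfl; exact Equiv.symm_apply_apply _ _
    · intro h; rw [← h]; simp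
  rcases eq_or_ne (π.symm i) 0 with h0 | h0
  · have h4 : (((finRotate (n+1)).symm (π.symm i) : Fin (n+1)) : ℕ) = n := by
      rw [h0, finRotate_symm_val]; simp
    have h5 : ((π.symm i : Fin (n+1)) : ℕ) = 0 := by rw [h0]; simp
    rw [if_pos (hiff.2 h0), h4, h5, if_neg (by omega : ¬ n < j),
      if_pos (by omega : (0:ℕ) < j + 1), hv, hiff.2 h0]
    push_cast
    ring
  · have hne : ((π.symm i : Fin (n+1)) : ℕ) ≠ 0 := fun h => h0 (Fin.ext (by simpa using h))
    have h4 : (((finRotate (n+1)).symm (π.symm i) : Fin (n+1)) : ℕ)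
        = ((π.symm i : Fin (n+1)) : ℕ) - 1 := by
      rw [finRotate_symm_val, if_neg hne]
    rw [if_neg (fun h => h0 (hiff.1 h)), h4]
    have hif : ((π.symm i : Fin (n+1)) : ℕ) - 1 < j ↔ ((π.symm i : Fin (n+1)) : ℕ) < j + 1 := by
      omega
    simp [hif]

/-- The face relation: if `π (last) = 0` and `b 0 = 0`, the facet `{v_0, …, v_{n-1}}`
lies in the face `x_0 = 0` and is a Freudenthal simplex of that face. -/
lemma vert_face {n N : ℕ} (b : Fin (n+1) → Fin N) (π : Equiv.Perm (Fin (n+1)))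
    (π' : Equiv.Perm (Fin n)) (hπ : π (Fin.last n) = 0) (hb0 : (b 0 : ℕ) = 0)
    (hπ' : ∀ i : Fin n, (π' i).succ = π i.castSucc) (j : ℕ) (hj : j ≤ n) :
    vert N b π j = Fin.cons 0 (vert N (fun i => b i.succ) π' j) := by
  funext i
  induction i using Fin.cases with
  | zero =>
    rw [Fin.cons_zero]
    unfold vert
    have h1 : π.symm 0 = Fin.last n := by rw [← hπ]; simp
    rw [h1]
    have : ¬ ((Fin.last n : Fin (n+1)) : ℕ) < j := by
      simp [Fin.last]; omega
    rw [if_neg this, hb0]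
    simp
  | succ i' =>
    rw [Fin.cons_succ]
    unfold vert
    have hval : ((π'.symm i' : Fin n) : ℕ) = ((π.symm i'.succ : Fin (n+1)) : ℕ) := by
      have h2 : π ((π'.symm i').castSucc) = i'.succ := by
        rw [← hπ' (π'.symm i')]
        simp
      have h3 : π.symm i'.succ = (π'.symm i').castSucc := by
        rw [← h2]; simp
      rw [h3]
      simp
    rw [hval]




lemma range_erase_last (m : ℕ) : (range (m+1)).erase m = range m := by
  ext j; simp only [mem_erase, mem_range]; omega

lemma range_erase_zero (m : ℕ) : (range (m+1)).erase 0 = (range m).image (· + 1) := by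
  ext j
  simp only [mem_erase, mem_range, mem_image]
  constructor
  · rintro ⟨h0, h1⟩; exact ⟨j - 1, by omega, by omega⟩
  · rintro ⟨i, hi, rfl⟩; omega

lemma univ_erase_zero (n : ℕ) :
    (univ : Finset (Fin (n+2))).erase 0 = (univ : Finset (Fin (n+1))).image Fin.succ := by
  ext t
  simp only [mem_erase, mem_univ, and_true, mem_image, true_and]
  rw [← Fin.exists_succ_eq]

def pushV {N : ℕ} (v : Fin N) : Fin N :=
  if h : (v : ℕ) + 1 < N then ⟨(v : ℕ) + 1, h⟩ else v

def pullV {N : ℕ} (v : Fin N) : Fin N :=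
  ⟨(v : ℕ) - 1, lt_of_le_of_lt (Nat.sub_le _ _) v.isLt⟩

lemma pushV_val {N : ℕ} (v : Fin N) (h : (v : ℕ) + 1 < N) : (pushV v : ℕ) = (v : ℕ) + 1 := by
  rw [pushV, dif_pos h]

lemma pullV_val {N : ℕ} (v : Fin N) : (pullV v : ℕ) = (v : ℕ) - 1 := rfl

/-- The pivot (reflection) map on pairs (simplex, omitted-vertex index). -/
def pivot {n N : ℕ} (τ : (Fin (n+1) → Fin N) × Equiv.Perm (Fin (n+1)) × Fin (n+2)) :
    (Fin (n+1) → Fin N) × Equiv.Perm (Fin (n+1)) × Fin (n+2) :=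
  if h0 : (τ.2.2 : ℕ) = 0 then
    (Function.update τ.1 (τ.2.1 0) (pushV (τ.1 (τ.2.1 0))),
      τ.2.1 * (finRotate (n+1)), Fin.last (n+1))
  else if hm : (τ.2.2 : ℕ) = n+1 then
    (Function.update τ.1 (τ.2.1 (Fin.last n)) (pullV (τ.1 (τ.2.1 (Fin.last n)))),
      τ.2.1 * (finRotate (n+1))⁻¹, 0)
  else
    (τ.1, τ.2.1 * Equiv.swap (⟨(τ.2.2 : ℕ) - 1, by omega⟩ : Fin (n+1))
      ⟨(τ.2.2 : ℕ), by have := τ.2.2.isLt; omega⟩, τ.2.2)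

/-- Restriction of a permutation of `Fin (n+1)` fixing `last ↦ 0` to a permutation of `Fin n`. -/
def permDown {n : ℕ} (π : Equiv.Perm (Fin (n+1))) (hπ : π (Fin.last n) = 0) :
    Equiv.Perm (Fin n) where
  toFun i := (π i.castSucc).pred (by
    intro h
    have : i.castSucc = Fin.last n := π.injective (h.trans hπ.symm)
    exact absurd (this ▸ Fin.castSucc_lt_last i) (lt_irrefl _))
  invFun i' := (π.symm i'.succ).castPred (by
    intro h
    have : i'.succ = (0 : Fin (n+1)) := by
      have := congrArg π h
      rwa [Equiv.apply_symm_apply, hπ] at this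
    exact Fin.succ_ne_zero i' this)
  left_inv i := by simp
  right_inv i' := by simp

lemma permDown_apply_succ {n : ℕ} (π : Equiv.Perm (Fin (n+1))) (hπ : π (Fin.last n) = 0)
    (i : Fin n) : ((permDown π hπ) i).succ = π i.castSucc := by
  simp [permDown]

/-- Extension of a permutation of `Fin n` to `Fin (n+1)` sending `last` to `0`. -/
def permUp {n : ℕ} (π' : Equiv.Perm (Fin n)) : Equiv.Perm (Fin (n+1)) where
  toFun := Fin.lastCases 0 (fun i => (π' i).succ)
  invFun := Fin.cases (Fin.last n) (fun i' => (π'.symm i').castSucc)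
  left_inv x := by
    induction x using Fin.lastCases with
    | last => simp
    | cast i => simp
  right_inv y := by
    induction y using Fin.cases with
    | zero => simp
    | succ i' => simp

lemma permUp_last {n : ℕ} (π' : Equiv.Perm (Fin n)) : permUp π' (Fin.last n) = 0 := by
  simp [permUp]

lemma permUp_castSucc {n : ℕ} (π' : Equiv.Perm (Fin n)) (i : Fin n) :
    permUp π' i.castSucc = (π' i).succ := by
  simp [permUp]

lemma permDown_permUp {n : ℕ} (π' : Equiv.Perm (Fin n)) :
    permDown (permUp π') (permUp_last π') = π' := by
  refine Equiv.ext fun i => ?_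
  have h := permDown_apply_succ (permUp π') (permUp_last π') i
  rw [permUp_castSucc] at h
  exact Fin.succ_injective _ h

lemma permUp_permDown {n : ℕ} (π : Equiv.Perm (Fin (n+1))) (hπ : π (Fin.last n) = 0) :
    permUp (permDown π hπ) = π := by
  ext x
  induction x using Fin.lastCases with
  | last => rw [permUp_last, hπ]
  | cast i => rw [permUp_castSucc, permDown_apply_succ]

open scoped Classical in
/-- Fully-labelled Freudenthal simplices in the subdivided cube `[0,N]^n`. -/
noncomputable def fullPairs (n N : ℕ) (lab : (Fin n → ℤ) → Fin (n+1)) :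
    Finset ((Fin n → Fin N) × Equiv.Perm (Fin n)) :=
  univ.filter (fun p => (range (n+1)).image (fun k => lab (vert N p.1 p.2 k)) = univ)

open scoped Classical in
/-- Pairs (simplex, omitted index) whose facet carries all labels except `0`. -/
noncomputable def doorTriples (n N : ℕ) (lab : (Fin n → ℤ) → Fin (n+1)) :
    Finset ((Fin n → Fin N) × Equiv.Perm (Fin n) × Fin (n+1)) :=
  univ.filter (fun τ => ((range (n+1)).erase ((τ.2.2 : Fin (n+1)) : ℕ)).image
    (fun j => lab (vert N τ.1 τ.2.1 j)) = univ.erase 0)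

lemma mem_fullPairs {n N : ℕ} {lab : (Fin n → ℤ) → Fin (n+1)}
    {p : (Fin n → Fin N) × Equiv.Perm (Fin n)} :
    p ∈ fullPairs n N lab ↔
      (range (n+1)).image (fun k => lab (vert N p.1 p.2 k)) = univ := by
  simp [fullPairs]

lemma mem_doorTriples {n N : ℕ} {lab : (Fin n → ℤ) → Fin (n+1)}
    {τ : (Fin n → Fin N) × Equiv.Perm (Fin n) × Fin (n+1)} :
    τ ∈ doorTriples n N lab ↔
      ((range (n+1)).erase ((τ.2.2 : Fin (n+1)) : ℕ)).image
        (fun j => lab (vert N τ.1 τ.2.1 j)) = univ.erase 0 := by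
  simp [doorTriples]

lemma doorTriples_card_mod (n N : ℕ) (lab : (Fin n → ℤ) → Fin (n+1)) :
    (doorTriples n N lab).card % 2 = (fullPairs n N lab).card % 2 := by
  classical
  have hfib : (doorTriples n N lab).card
      = ∑ p ∈ (univ : Finset ((Fin n → Fin N) × Equiv.Perm (Fin n))),
          ((doorTriples n N lab).filter (fun τ => (τ.1, τ.2.1) = p)).card :=
    card_eq_sum_card_fiberwise (fun τ _ => mem_univ _)
  have hper : ∀ p : (Fin n → Fin N) × Equiv.Perm (Fin n),
      ((doorTriples n N lab).filter (fun τ => (τ.1, τ.2.1) = p)).card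
      = ((range (n+1)).filter (fun k => ((range (n+1)).erase k).image
          (fun j => lab (vert N p.1 p.2 j)) = univ.erase 0)).card := by
    rintro ⟨b, π⟩
    apply card_bij (fun τ _ => ((τ.2.2 : Fin (n+1)) : ℕ))
    · rintro ⟨b', π', k⟩ hτ
      obtain ⟨hτd, hτp⟩ := mem_filter.1 hτ
      rw [Prod.mk.injEq] at hτp
      obtain ⟨rfl, rfl⟩ := hτp
      have hdoor := mem_doorTriples.1 hτd
      exact mem_filter.2 ⟨mem_range.2 k.isLt, hdoor⟩
    · rintro ⟨b₁, π₁, k₁⟩ h₁ ⟨b₂, π₂, k₂⟩ h₂ hk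
      obtain ⟨_, hp₁⟩ := mem_filter.1 h₁
      obtain ⟨_, hp₂⟩ := mem_filter.1 h₂
      rw [Prod.mk.injEq] at hp₁ hp₂
      obtain ⟨rfl, rfl⟩ := hp₁
      obtain ⟨rfl, rfl⟩ := hp₂
      simp only [Prod.mk.injEq]
      refine ⟨trivial, trivial, Fin.ext hk⟩
    · intro k hk
      obtain ⟨hkr, hkd⟩ := mem_filter.1 hk
      refine ⟨(b, π, ⟨k, mem_range.1 hkr⟩), ?_, rfl⟩
      refine mem_filter.2 ⟨mem_doorTriples.2 ?_, rfl⟩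
      exact hkd
  have hpar : ∀ p : (Fin n → Fin N) × Equiv.Perm (Fin n),
      ((range (n+1)).filter (fun k => ((range (n+1)).erase k).image
          (fun j => lab (vert N p.1 p.2 j)) = univ.erase 0)).card % 2
      = if (range (n+1)).image (fun k => lab (vert N p.1 p.2 k)) = univ then 1 else 0 := by
    intro p
    exact door_parity (range (n+1)) (fun k => lab (vert N p.1 p.2 k)) 0 (by simp)
  have hfull : (fullPairs n N lab).card
      = ∑ p ∈ (univ : Finset ((Fin n → Fin N) × Equiv.Perm (Fin n))),
          if (range (n+1)).image (fun k => lab (vert N p.1 p.2 k)) = univ then 1 else 0 := by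
    rw [fullPairs, card_filter]
  rw [hfib, Finset.sum_nat_mod, Finset.sum_congr rfl (fun p _ => by rw [hper p, hpar p]), hfull]
lemma finRotate_last' {n : ℕ} : finRotate (n+1) (Fin.last n) = 0 := by
  rw [finRotate_succ_apply, Fin.last_add_one]

lemma finRotate_inv_zero {n : ℕ} : (finRotate (n+1))⁻¹ (0 : Fin (n+1)) = Fin.last n := by
  rw [← finRotate_last', ← Equiv.Perm.mul_apply, inv_mul_cancel, Equiv.Perm.one_apply]

/-- If the facet omitting the base vertex is a door, the simplex does not touch the
upper face in direction `π 0`. -/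
lemma door_k0_lt {n N : ℕ} {lab : (Fin (n+1) → ℤ) → Fin (n+2)}
    (hB : ∀ x : Fin (n+1) → ℤ, (∀ j, 0 ≤ x j ∧ x j ≤ N) →
      ∀ i : Fin (n+1), x i = N → lab x ≠ Fin.last (n+1))
    {b : Fin (n+1) → Fin N} {π : Equiv.Perm (Fin (n+1))}
    (hdoor : ((range (n+2)).erase 0).image (fun j => lab (vert N b π j)) = univ.erase 0) :
    (b (π 0) : ℕ) + 1 < N := by
  by_contra h
  have hbv : (b (π 0) : ℕ) + 1 = N := by have := (b (π 0)).isLt; omega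
  have hlast : (Fin.last (n+1) : Fin (n+2)) ∈ (univ : Finset (Fin (n+2))).erase 0 := by
    refine mem_erase.2 ⟨?_, mem_univ _⟩
    simp [Fin.ext_iff]
  rw [← hdoor] at hlast
  obtain ⟨j, hj, hlab⟩ := mem_image.1 hlast
  obtain ⟨hj0, hjr⟩ := mem_erase.1 hj
  refine hB (vert N b π j) (vert_mem_grid b π j) (π 0) ?_ hlab
  unfold vert
  rw [Equiv.symm_apply_apply]
  simp only [Fin.val_zero]
  simp only [show (0:ℕ) < j by omega, ↓reduceIte]
  push_cast
  omega

/-- If the facet omitting the top vertex is a door lying in a lower face, that face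
is the face `x_0 = 0` (and the base point lies in it). -/
lemma door_klast {n N : ℕ} {lab : (Fin (n+1) → ℤ) → Fin (n+2)}
    (hA : ∀ x : Fin (n+1) → ℤ, (∀ j, 0 ≤ x j ∧ x j ≤ N) →
      ∀ i : Fin (n+1), x i = 0 → lab x ≠ i.castSucc)
    {b : Fin (n+1) → Fin N} {π : Equiv.Perm (Fin (n+1))}
    (hdoor : ((range (n+2)).erase (n+1)).image (fun j => lab (vert N b π j)) = univ.erase 0)
    (hb0 : (b (π (Fin.last n)) : ℕ) = 0) :
    π (Fin.last n) = 0 ∧ (b 0 : ℕ) = 0 := by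
  have key : π (Fin.last n) = 0 := by
    by_contra hne
    have hmem : (π (Fin.last n)).castSucc ∈ (univ : Finset (Fin (n+2))).erase 0 := by
      refine mem_erase.2 ⟨?_, mem_univ _⟩
      intro h
      exact hne (by
        have : ((π (Fin.last n)).castSucc : ℕ) = 0 := by rw [h]; rfl
        exact Fin.ext (by simpa using this))
    rw [← hdoor] at hmem
    obtain ⟨j, hj, hlab⟩ := mem_image.1 hmem
    obtain ⟨hjl, hjr⟩ := mem_erase.1 hj
    rw [mem_range] at hjr
    refine hA (vert N b π j) (vert_mem_grid b π j) (π (Fin.last n)) ?_ hlab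
    unfold vert
    rw [Equiv.symm_apply_apply]
    rw [if_neg (by rw [Fin.val_last]; omega : ¬ ((Fin.last n : Fin (n+1)) : ℕ) < j)]
    simp [hb0]
  refine ⟨key, ?_⟩
  rw [key] at hb0
  exact hb0

lemma door_swap' {n N : ℕ} (lab : (Fin (n+1) → ℤ) → Fin (n+2))
    {b : Fin (n+1) → Fin N} {π : Equiv.Perm (Fin (n+1))} {k : ℕ}
    (h0 : 0 < k) (hk : k < n+1)
    (hdoor : ((range (n+2)).erase k).image (fun j => lab (vert N b π j)) = univ.erase 0) :
    ((range (n+2)).erase k).image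
      (fun j => lab (vert N b (π * Equiv.swap (⟨k-1, by omega⟩ : Fin (n+1)) ⟨k, hk⟩) j))
      = univ.erase 0 := by
  rw [← hdoor]
  apply image_congr
  intro j hj
  rw [mem_coe, mem_erase] at hj
  dsimp only
  rw [vert_swap b π k h0 hk j hj.1]

lemma door_rot0' {n N : ℕ} (lab : (Fin (n+1) → ℤ) → Fin (n+2))
    {b : Fin (n+1) → Fin N} {π : Equiv.Perm (Fin (n+1))} (hb : (b (π 0) : ℕ) + 1 < N)
    (hdoor : ((range (n+2)).erase 0).image (fun j => lab (vert N b π j)) = univ.erase 0) :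
    ((range (n+2)).erase (n+1)).image
      (fun j => lab (vert N (Function.update b (π 0) (pushV (b (π 0))))
        (π * finRotate (n+1)) j)) = univ.erase 0 := by
  rw [range_erase_last]
  have hcongr : ∀ j ∈ (range (n+1) : Finset ℕ),
      lab (vert N (Function.update b (π 0) (pushV (b (π 0)))) (π * finRotate (n+1)) j)
        = ((fun j => lab (vert N b π j)) ∘ (· + 1)) j := by
    intro j hj
    rw [mem_range] at hj
    show lab _ = lab (vert N b π (j+1))
    rw [vert_rot b π (pushV (b (π 0))) (pushV_val _ hb) j (by omega)]
  rw [image_congr (fun j hj => hcongr j hj), ← Finset.image_image, ← range_erase_zero, hdoor]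

lemma door_rotn' {n N : ℕ} (lab : (Fin (n+1) → ℤ) → Fin (n+2))
    {b : Fin (n+1) → Fin N} {π : Equiv.Perm (Fin (n+1))}
    (hb0 : (b (π (Fin.last n)) : ℕ) ≠ 0)
    (hdoor : ((range (n+2)).erase (n+1)).image (fun j => lab (vert N b π j)) = univ.erase 0) :
    ((range (n+2)).erase 0).image
      (fun j => lab (vert N (Function.update b (π (Fin.last n)) (pullV (b (π (Fin.last n)))))
        (π * (finRotate (n+1))⁻¹) j)) = univ.erase 0 := by
  set b'' := Function.update b (π (Fin.last n)) (pullV (b (π (Fin.last n)))) with hb''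
  set π'' := π * (finRotate (n+1))⁻¹ with hπ''
  have hπ''0 : π'' 0 = π (Fin.last n) := by
    rw [hπ'', Equiv.Perm.mul_apply, finRotate_inv_zero]
  have hkey : ∀ j : ℕ, j ≤ n → vert N b π j = vert N b'' π'' (j+1) := by
    intro j hj
    have hv : ((b (π (Fin.last n))) : ℕ) = (b'' (π'' 0) : ℕ) + 1 := by
      rw [hπ''0, hb'', Function.update_self, pullV_val]
      omega
    have hup : Function.update b'' (π'' 0) (b (π (Fin.last n))) = b := by
      rw [hπ''0, hb'', Function.update_idem, Function.update_eq_self]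
    have hperm : π'' * finRotate (n+1) = π := by
      rw [hπ'', mul_assoc, inv_mul_cancel, mul_one]
    have h := vert_rot b'' π'' (b (π (Fin.last n))) hv j hj
    rw [hup, hperm] at h
    exact h
  rw [range_erase_zero, Finset.image_image]
  have hcongr : ∀ j ∈ (range (n+1) : Finset ℕ),
      ((fun j => lab (vert N b'' π'' j)) ∘ (· + 1)) j = lab (vert N b π j) := by
    intro j hj
    rw [mem_range] at hj
    show lab (vert N b'' π'' (j+1)) = _
    rw [← hkey j (by omega)]
  rw [image_congr (fun j hj => hcongr j hj), ← range_erase_last (n+1), hdoor]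
lemma pivot_k0 {n N : ℕ} (b : Fin (n+1) → Fin N) (π : Equiv.Perm (Fin (n+1)))
    (k : Fin (n+2)) (h0 : (k : ℕ) = 0) :
    pivot (b, π, k) = (Function.update b (π 0) (pushV (b (π 0))),
      π * finRotate (n+1), Fin.last (n+1)) := by
  simp only [pivot]
  rw [dif_pos h0]

lemma pivot_klast {n N : ℕ} (b : Fin (n+1) → Fin N) (π : Equiv.Perm (Fin (n+1)))
    (k : Fin (n+2)) (hm : (k : ℕ) = n+1) :
    pivot (b, π, k) = (Function.update b (π (Fin.last n)) (pullV (b (π (Fin.last n)))),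
      π * (finRotate (n+1))⁻¹, 0) := by
  simp only [pivot]
  rw [dif_neg (by omega), dif_pos hm]

lemma pivot_mid {n N : ℕ} (b : Fin (n+1) → Fin N) (π : Equiv.Perm (Fin (n+1)))
    (k : Fin (n+2)) (h0 : (k : ℕ) ≠ 0) (hm : (k : ℕ) ≠ n+1) :
    pivot (b, π, k) = (b, π * Equiv.swap (⟨(k : ℕ) - 1, by omega⟩ : Fin (n+1))
      ⟨(k : ℕ), by have := k.isLt; omega⟩, k) := by
  simp only [pivot]
  rw [dif_neg h0, dif_neg hm]

open scoped Classical in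
lemma pivot_good (n N : ℕ) (lab : (Fin (n+1) → ℤ) → Fin (n+2))
    (hA : ∀ x : Fin (n+1) → ℤ, (∀ j, 0 ≤ x j ∧ x j ≤ N) →
      ∀ i : Fin (n+1), x i = 0 → lab x ≠ i.castSucc)
    (hB : ∀ x : Fin (n+1) → ℤ, (∀ j, 0 ≤ x j ∧ x j ≤ N) →
      ∀ i : Fin (n+1), x i = N → lab x ≠ Fin.last (n+1)) :
    ∀ τ ∈ (doorTriples (n+1) N lab).filter
        (fun τ => ¬(((τ.2.2 : Fin (n+2)) : ℕ) = n+1 ∧ (τ.1 (τ.2.1 (Fin.last n)) : ℕ) = 0)),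
      pivot τ ∈ (doorTriples (n+1) N lab).filter
        (fun τ => ¬(((τ.2.2 : Fin (n+2)) : ℕ) = n+1 ∧ (τ.1 (τ.2.1 (Fin.last n)) : ℕ) = 0))
      ∧ pivot (pivot τ) = τ ∧ pivot τ ≠ τ := by
  rintro ⟨b, π, k⟩ hτ
  obtain ⟨hτd, hbd⟩ := mem_filter.1 hτ
  have hdoor := mem_doorTriples.1 hτd
  simp only at hdoor hbd
  rcases eq_or_ne (k : ℕ) 0 with h0 | h0
  · -- base-vertex case
    rw [h0] at hdoor
    have hb := door_k0_lt hB hdoor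
    have hpiv := pivot_k0 b π k h0
    have h1 : (π * finRotate (n+1)) (Fin.last n) = π 0 := by
      rw [Equiv.Perm.mul_apply, finRotate_last']
    refine ⟨mem_filter.2 ⟨mem_doorTriples.2 ?_, ?_⟩, ?_, ?_⟩
    · rw [hpiv]
      simp only [Fin.val_last]
      exact door_rot0' lab hb hdoor
    · rw [hpiv]
      simp only [Fin.val_last]
      rintro ⟨-, hcontra⟩
      rw [h1, Function.update_self, pushV_val _ hb] at hcontra
      omega
    · rw [hpiv, pivot_klast _ _ _ (Fin.val_last _), h1]
      simp only [Prod.mk.injEq]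
      refine ⟨?_, ?_, ?_⟩
      · rw [Function.update_self, Function.update_idem]
        have : pullV (pushV (b (π 0))) = b (π 0) :=
          Fin.ext (by rw [pullV_val, pushV_val _ hb]; omega)
        rw [this, Function.update_eq_self]
      · rw [mul_assoc, mul_inv_cancel, mul_one]
      · exact Fin.ext (by rw [Fin.val_zero, h0])
    · rw [hpiv]
      intro h
      have := congrArg (fun t => ((t.2.2 : Fin (n+2)) : ℕ)) h
      simp only [Fin.val_last] at this
      omega
  · rcases eq_or_ne (k : ℕ) (n+1) with hm | hm
    · -- top-vertex case
      rw [hm] at hdoor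
      have hb0 : (b (π (Fin.last n)) : ℕ) ≠ 0 := fun h => hbd ⟨hm, h⟩
      have hpiv := pivot_klast b π k hm
      have h1 : (π * (finRotate (n+1))⁻¹) 0 = π (Fin.last n) := by
        rw [Equiv.Perm.mul_apply, finRotate_inv_zero]
      refine ⟨mem_filter.2 ⟨mem_doorTriples.2 ?_, ?_⟩, ?_, ?_⟩
      · rw [hpiv]
        simp only [Fin.val_zero]
        exact door_rotn' lab hb0 hdoor
      · rw [hpiv]
        simp only [Fin.val_zero]
        rintro ⟨hcontra, -⟩
        omega
      · rw [hpiv, pivot_k0 _ _ _ (Fin.val_zero _), h1]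
        simp only [Prod.mk.injEq]
        refine ⟨?_, ?_, ?_⟩
        · rw [Function.update_self, Function.update_idem]
          have hlt := (b (π (Fin.last n))).isLt
          have : pushV (pullV (b (π (Fin.last n)))) = b (π (Fin.last n)) := by
            refine Fin.ext ?_
            rw [pushV_val _ (by rw [pullV_val]; omega), pullV_val]
            omega
          rw [this, Function.update_eq_self]
        · rw [mul_assoc, inv_mul_cancel, mul_one]
        · exact Fin.ext (by rw [Fin.val_last, hm])
      · rw [hpiv]
        intro h
        have := congrArg (fun t => ((t.2.2 : Fin (n+2)) : ℕ)) h
        simp only [Fin.val_zero] at this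
        omega
    · -- middle case
      have hk1 : 0 < (k : ℕ) := by omega
      have hk2 : (k : ℕ) < n + 1 := by have := k.isLt; omega
      have hpiv := pivot_mid b π k h0 hm
      refine ⟨mem_filter.2 ⟨mem_doorTriples.2 ?_, ?_⟩, ?_, ?_⟩
      · rw [hpiv]
        simp only
        exact door_swap' lab hk1 hk2 hdoor
      · rw [hpiv]
        simp only
        rintro ⟨hcontra, -⟩
        omega
      · rw [hpiv, pivot_mid _ _ _ h0 hm]
        simp only [Prod.mk.injEq]
        refine ⟨trivial, ?_, trivial⟩
        rw [mul_assoc, Equiv.swap_mul_self, mul_one]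
      · rw [hpiv]
        intro h
        have h2 : π * Equiv.swap (⟨(k : ℕ) - 1, by omega⟩ : Fin (n+1))
            ⟨(k : ℕ), by have := k.isLt; omega⟩ = π := congrArg (fun t => t.2.1) h
        have h3 : Equiv.swap (⟨(k : ℕ) - 1, by omega⟩ : Fin (n+1))
            ⟨(k : ℕ), by have := k.isLt; omega⟩ = 1 :=
          mul_left_cancel (a := π) (by rw [mul_one]; exact h2)
        have h4 := congrArg (fun σ : Equiv.Perm (Fin (n+1)) =>
          σ (⟨(k : ℕ) - 1, by omega⟩ : Fin (n+1))) h3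
        simp only [Equiv.swap_apply_left, Equiv.Perm.one_apply] at h4
        have := congrArg (fun t : Fin (n+1) => (t : ℕ)) h4
        simp at this
        omega
/-- "Forget the label 0" map used to restrict a labelling to the face `x_0 = 0`. -/
def predD {n : ℕ} (t : Fin (n+2)) : Fin (n+1) :=
  if h : t = 0 then 0 else t.pred h

lemma face_grid {n N : ℕ} (w : Fin n → ℤ) (hw : ∀ j, 0 ≤ w j ∧ w j ≤ N) :
    ∀ j, 0 ≤ (Fin.cons 0 w : Fin (n+1) → ℤ) j ∧ (Fin.cons 0 w : Fin (n+1) → ℤ) j ≤ N := by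
  intro j
  induction j using Fin.cases with
  | zero =>
    rw [Fin.cons_zero]
    exact ⟨le_refl 0, Int.natCast_nonneg N⟩
  | succ i' =>
    rw [Fin.cons_succ]
    exact hw i'

/-- The door condition at the top index on the face `x_0 = 0` is exactly the
fully-labelled condition for the induced labelling on that face. -/
lemma face_iff {n N : ℕ} {lab : (Fin (n+1) → ℤ) → Fin (n+2)}
    (hA : ∀ x : Fin (n+1) → ℤ, (∀ j, 0 ≤ x j ∧ x j ≤ N) →
      ∀ i : Fin (n+1), x i = 0 → lab x ≠ i.castSucc)
    (b : Fin (n+1) → Fin N) (π : Equiv.Perm (Fin (n+1)))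
    (hπ : π (Fin.last n) = 0) (hb0 : (b 0 : ℕ) = 0) :
    (((range (n+2)).erase (n+1)).image (fun j => lab (vert N b π j)) = univ.erase 0
      ↔ (range (n+1)).image
          (fun k => predD (lab (Fin.cons 0 (vert N (fun i => b i.succ) (permDown π hπ) k))))
        = univ) := by
  have hlab : ∀ j ∈ (range (n+1) : Finset ℕ),
      lab (vert N b π j)
      = (Fin.succ ∘ (fun k => predD (lab (Fin.cons 0
          (vert N (fun i => b i.succ) (permDown π hπ) k))))) j := by
    intro j hj
    rw [mem_range] at hj
    have hface := vert_face b π (permDown π hπ) hπ hb0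
      (fun i => permDown_apply_succ π hπ i) j (by omega)
    show lab (vert N b π j) = Fin.succ (predD (lab (Fin.cons 0
      (vert N (fun i => b i.succ) (permDown π hπ) j))))
    rw [← hface]
    have hgrid := vert_mem_grid b π j
    have hx0 : lab (vert N b π j) ≠ 0 := by
      have h0 : vert N b π j 0 = 0 := by
        have := congrFun hface 0
        rw [this, Fin.cons_zero]
      have := hA (vert N b π j) hgrid 0 h0
      rwa [Fin.castSucc_zero] at this
    rw [hface] at hx0 ⊢
    rw [predD, dif_neg hx0, Fin.succ_pred]
  rw [range_erase_last, image_congr (fun j hj => hlab j hj), ← Finset.image_image,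
    univ_erase_zero]
  constructor
  · intro h
    exact Finset.image_injective (Fin.succ_injective (n+1)) h
  · intro h
    rw [h]

open scoped Classical in
lemma bdry_card {n N : ℕ} (hN : 0 < N) (lab : (Fin (n+1) → ℤ) → Fin (n+2))
    (hA : ∀ x : Fin (n+1) → ℤ, (∀ j, 0 ≤ x j ∧ x j ≤ N) →
      ∀ i : Fin (n+1), x i = 0 → lab x ≠ i.castSucc) :
    ((doorTriples (n+1) N lab).filter
        (fun τ => ((τ.2.2 : Fin (n+2)) : ℕ) = n+1 ∧ (τ.1 (τ.2.1 (Fin.last n)) : ℕ) = 0)).card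
      = (fullPairs n N (fun y => predD (lab (Fin.cons 0 y)))).card := by
  classical
  have hklast : ∀ τ ∈ (doorTriples (n+1) N lab).filter
      (fun τ => ((τ.2.2 : Fin (n+2)) : ℕ) = n+1 ∧ (τ.1 (τ.2.1 (Fin.last n)) : ℕ) = 0),
      τ.2.1 (Fin.last n) = 0 ∧ (τ.1 0 : ℕ) = 0 := by
    rintro ⟨b, π, k⟩ hτ
    obtain ⟨hτd, hm, hb0⟩ := mem_filter.1 hτ
    have hdoor := mem_doorTriples.1 hτd
    simp only at hdoor hm hb0 ⊢
    rw [hm] at hdoor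
    exact door_klast hA hdoor hb0
  refine card_bij' (fun τ hτ => ((fun i => τ.1 i.succ), permDown τ.2.1 (hklast τ hτ).1))
    (fun p _ => (Fin.cons (⟨0, hN⟩ : Fin N) p.1, permUp p.2, Fin.last (n+1)))
    ?hi ?hj ?left ?right
  case hi =>
    rintro ⟨b, π, k⟩ hτ
    obtain ⟨hτd, hm, hb0⟩ := mem_filter.1 hτ
    have hdoor := mem_doorTriples.1 hτd
    simp only at hdoor hm hb0
    rw [hm] at hdoor
    exact mem_fullPairs.2 ((face_iff hA b π (hklast _ hτ).1 (hklast _ hτ).2).1 hdoor)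
  case hj =>
    rintro ⟨b', π'⟩ hp
    have hfull := mem_fullPairs.1 hp
    refine mem_filter.2 ⟨mem_doorTriples.2 ?_, ?_, ?_⟩
    · simp only [Fin.val_last]
      refine (face_iff hA _ (permUp π') (permUp_last π') (by rw [Fin.cons_zero])).2 ?_
      have h1 : (fun i : Fin n => (Fin.cons (⟨0, hN⟩ : Fin N) b' : Fin (n+1) → Fin N) i.succ)
          = b' := by
        funext i; rw [Fin.cons_succ]
      have h2 : permDown (permUp π') (permUp_last π') = π' := permDown_permUp π'
      rw [h1, h2]
      exact hfull
    · simp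
    · simp only [permUp_last, Fin.cons_zero]
  case left =>
    rintro ⟨b, π, k⟩ hτ
    obtain ⟨hπl, hb00⟩ := hklast _ hτ
    obtain ⟨hτd, hm, hb0⟩ := mem_filter.1 hτ
    simp only at hπl hb00 hm hb0 ⊢
    simp only [Prod.mk.injEq]
    refine ⟨?_, ?_, ?_⟩
    · funext jj
      induction jj using Fin.cases with
      | zero => rw [Fin.cons_zero]; exact Fin.ext (by simpa using hb00.symm)
      | succ i' => rw [Fin.cons_succ]
    · exact permUp_permDown π hπl
    · exact Fin.ext (by rw [Fin.val_last, hm])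
  case right =>
    rintro ⟨b', π'⟩ hp
    simp only [Prod.mk.injEq]
    constructor
    · funext i; rw [Fin.cons_succ]
    · exact permDown_permUp π'
/-- Kuhn's combinatorial lemma (cubical Sperner / combinatorial Poincaré–Miranda):
under the boundary labelling conditions, the number of fully labelled Freudenthal
simplices of the subdivided cube `[0,N]^n` is odd. -/
theorem kuhn (n : ℕ) : ∀ N : ℕ, 0 < N → ∀ lab : (Fin n → ℤ) → Fin (n+1),
    (∀ x : Fin n → ℤ, (∀ j, 0 ≤ x j ∧ x j ≤ N) →
      ∀ i : Fin n, x i = 0 → lab x ≠ i.castSucc) →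
    (∀ x : Fin n → ℤ, (∀ j, 0 ≤ x j ∧ x j ≤ N) →
      ∀ i : Fin n, x i = N → lab x ≠ Fin.last n) →
    Odd (fullPairs n N lab).card := by
  induction n with
  | zero =>
    intro N hN lab _ _
    have huniv : fullPairs 0 N lab = univ := by
      rw [fullPairs, filter_true_of_mem]
      intro p _
      apply eq_univ_of_forall
      intro t
      exact mem_image.2 ⟨0, by simp, Subsingleton.elim (α := Fin 1) _ _⟩
    rw [huniv, card_univ]
    simp [Fintype.card_prod]
  | succ n IH =>
    intro N hN lab hA hB
    classical
    set lab' : (Fin n → ℤ) → Fin (n+1) := fun y => predD (lab (Fin.cons 0 y)) with hlab'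
    have hA' : ∀ y : Fin n → ℤ, (∀ j, 0 ≤ y j ∧ y j ≤ N) →
        ∀ i : Fin n, y i = 0 → lab' y ≠ i.castSucc := by
      intro y hy i hyi
      have hgrid := face_grid y hy
      have hx0 : lab (Fin.cons 0 y) ≠ 0 := by
        have := hA (Fin.cons 0 y) hgrid 0 (Fin.cons_zero _ _)
        rwa [Fin.castSucc_zero] at this
      have hxi : lab (Fin.cons 0 y) ≠ (i.succ).castSucc := by
        refine hA (Fin.cons 0 y) hgrid i.succ ?_
        rw [Fin.cons_succ, hyi]
      rw [hlab']
      simp only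
      rw [predD, dif_neg hx0]
      intro h
      apply hxi
      rw [← Fin.succ_pred (lab (Fin.cons 0 y)) hx0, h, Fin.succ_castSucc]
    have hB' : ∀ y : Fin n → ℤ, (∀ j, 0 ≤ y j ∧ y j ≤ N) →
        ∀ i : Fin n, y i = N → lab' y ≠ Fin.last n := by
      intro y hy i hyi
      have hgrid := face_grid y hy
      have hx0 : lab (Fin.cons 0 y) ≠ 0 := by
        have := hA (Fin.cons 0 y) hgrid 0 (Fin.cons_zero _ _)
        rwa [Fin.castSucc_zero] at this
      have hxi : lab (Fin.cons 0 y) ≠ Fin.last (n+1) := by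
        refine hB (Fin.cons 0 y) hgrid i.succ ?_
        rw [Fin.cons_succ, hyi]
      rw [hlab']
      simp only
      rw [predD, dif_neg hx0]
      intro h
      apply hxi
      rw [← Fin.succ_pred (lab (Fin.cons 0 y)) hx0, h, Fin.succ_last]
    have hIH := IH N hN lab' hA' hB'
    have h1 := doorTriples_card_mod (n+1) N lab
    set P : (Fin (n+1) → Fin N) × Equiv.Perm (Fin (n+1)) × Fin (n+2) → Prop :=
      fun τ => ((τ.2.2 : Fin (n+2)) : ℕ) = n+1 ∧ (τ.1 (τ.2.1 (Fin.last n)) : ℕ) = 0 with hP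
    have h2 : ((doorTriples (n+1) N lab).filter P).card
        + ((doorTriples (n+1) N lab).filter (fun τ => ¬ P τ)).card
        = (doorTriples (n+1) N lab).card :=
      card_filter_add_card_filter_not _
    have h3 : Even (((doorTriples (n+1) N lab).filter (fun τ => ¬ P τ)).card) := by
      refine even_card_of_involution _ pivot ?_ ?_ ?_
      · exact fun a ha => (pivot_good n N lab hA hB a ha).1
      · exact fun a ha => (pivot_good n N lab hA hB a ha).2.1
      · exact fun a ha => (pivot_good n N lab hA hB a ha).2.2
    have h4 : ((doorTriples (n+1) N lab).filter P).card = (fullPairs n N lab').card :=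
      bdry_card hN lab hA
    rw [Nat.odd_iff] at hIH ⊢
    rw [Nat.even_iff] at h3
    omega
lemma approx_step {n : ℕ} (ℓ u : Fin n → ℝ) (hlu : ∀ i, ℓ i ≤ u i)
    (f : Fin n → (Fin n → ℝ) → ℝ)
    (hlow : ∀ i, ∀ x : Fin n → ℝ, (∀ j, x j ∈ Set.Icc (ℓ j) (u j)) →
      0 ≤ f i (Function.update x i (ℓ i)))
    (hupp : ∀ i, ∀ x : Fin n → ℝ, (∀ j, x j ∈ Set.Icc (ℓ j) (u j)) →
      f i (Function.update x i (u i)) ≤ 0)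
    (M : ℕ) :
    ∃ x : Fin n → ℝ, (∀ j, x j ∈ Set.Icc (ℓ j) (u j)) ∧ ∀ i : Fin n,
      (∃ a, (∀ j, a j ∈ Set.Icc (ℓ j) (u j)) ∧ (∀ j, |a j - x j| ≤ (u j - ℓ j)/(M+1))
        ∧ f i a ≤ 1/(M+1)) ∧
      (∃ c, (∀ j, c j ∈ Set.Icc (ℓ j) (u j)) ∧ (∀ j, |c j - x j| ≤ (u j - ℓ j)/(M+1))
        ∧ -(1/(M+1)) ≤ f i c) := by
  classical
  set N : ℕ := M + 1 with hNdef
  have hN : 0 < N := Nat.succ_pos M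
  have hNR : (0:ℝ) < (N:ℝ) := by exact_mod_cast hN
  set pmap : (Fin n → ℤ) → (Fin n → ℝ) :=
    fun z j => ℓ j + ((z j : ℝ)/(N:ℝ)) * (u j - ℓ j) with hpmap
  have hpD : ∀ z : Fin n → ℤ, (∀ j, 0 ≤ z j ∧ z j ≤ (N:ℤ)) →
      ∀ j, pmap z j ∈ Set.Icc (ℓ j) (u j) := by
    intro z hz j
    obtain ⟨h1, h2⟩ := hz j
    have h1' : (0:ℝ) ≤ (z j : ℝ) := by exact_mod_cast h1
    have h2' : ((z j : ℝ)) ≤ (N:ℝ) := by exact_mod_cast h2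
    have hul := hlu j
    have ht0 : 0 ≤ (z j : ℝ)/(N:ℝ) := div_nonneg h1' hNR.le
    have ht1 : (z j : ℝ)/(N:ℝ) ≤ 1 := (div_le_one hNR).2 h2'
    constructor
    · have : 0 ≤ ((z j : ℝ)/(N:ℝ)) * (u j - ℓ j) := mul_nonneg ht0 (by linarith)
      simp only [hpmap]
      linarith
    · simp only [hpmap]
      nlinarith
  set G : Fin n → (Fin n → ℤ) → ℝ :=
    fun i z => f i (pmap z) + (1/(N:ℝ)) * (1 - 2 * ((z i : ℝ)/(N:ℝ))) with hG
  set lab : (Fin n → ℤ) → Fin (n+1) :=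
    fun z => if h : ∃ i, G i z < 0 then (h.choose).castSucc else Fin.last n with hlabdef
  have hlab_eq : ∀ z i, lab z = i.castSucc → G i z < 0 := by
    intro z i h
    simp only [hlabdef] at h
    by_cases hex : ∃ i', G i' z < 0
    · rw [dif_pos hex] at h
      have h2 : hex.choose = i := Fin.castSucc_injective n h
      rw [← h2]
      exact hex.choose_spec
    · rw [dif_neg hex] at h
      exfalso
      have := congrArg Fin.val h
      rw [Fin.val_last] at this
      have := i.isLt
      simp only [Fin.coe_castSucc] at *
      omega
  have hlab_last : ∀ z, lab z = Fin.last n → ∀ i, 0 ≤ G i z := by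
    intro z h i
    simp only [hlabdef] at h
    by_cases hex : ∃ i', G i' z < 0
    · rw [dif_pos hex] at h
      exfalso
      have := congrArg Fin.val h
      rw [Fin.val_last] at this
      have := (hex.choose).isLt
      simp only [Fin.coe_castSucc] at *
      omega
    · push_neg at hex
      exact le_of_not_gt (by intro hc; exact absurd hc (not_lt.2 (hex i)))
  -- boundary conditions for the labelling
  have hAlab : ∀ z : Fin n → ℤ, (∀ j, 0 ≤ z j ∧ z j ≤ (N:ℤ)) →
      ∀ i : Fin n, z i = 0 → lab z ≠ i.castSucc := by
    intro z hz i hzi h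
    have hGpos : 0 < G i z := by
      have hD := hpD z hz
      have hpz : pmap z i = ℓ i := by
        simp only [hpmap, hzi]
        norm_num
      have hf0 : 0 ≤ f i (pmap z) := by
        have := hlow i (pmap z) hD
        rwa [show Function.update (pmap z) i (ℓ i) = pmap z by
          rw [← hpz]; exact Function.update_eq_self i (pmap z)] at this
      have hzir : ((z i : ℝ)) = 0 := by rw [hzi]; norm_num
      simp only [hG, hzir]
      rw [zero_div]
      have h1N : 0 < ((N:ℝ))⁻¹ := by positivity
      norm_num
      linarith
    exact absurd (hlab_eq z i h) (not_lt.2 hGpos.le)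
  have hBlab : ∀ z : Fin n → ℤ, (∀ j, 0 ≤ z j ∧ z j ≤ (N:ℤ)) →
      ∀ i : Fin n, z i = (N:ℤ) → lab z ≠ Fin.last n := by
    intro z hz i hzi h
    have hGneg : G i z < 0 := by
      have hD := hpD z hz
      have hpz : pmap z i = u i := by
        simp only [hpmap, hzi]
        field_simp
        push_cast
        ring
      have hf0 : f i (pmap z) ≤ 0 := by
        have := hupp i (pmap z) hD
        rwa [show Function.update (pmap z) i (u i) = pmap z by
          rw [← hpz]; exact Function.update_eq_self i (pmap z)] at this
      have hziR : ((z i : ℝ)) = (N:ℝ) := by rw [hzi]; norm_num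
      simp only [hG, hziR]
      have : (N:ℝ)/(N:ℝ) = 1 := div_self hNR.ne'
      rw [this]
      have h1N : 0 < 1/(N:ℝ) := by positivity
      nlinarith
    exact absurd hGneg (not_lt.2 (hlab_last z h i))
  -- a fully labelled simplex exists
  have hodd := kuhn n N hN lab hAlab hBlab
  have hpos : 0 < (fullPairs n N lab).card := by
    rcases hodd with ⟨t, ht⟩
    omega
  obtain ⟨⟨b, π⟩, hbπ⟩ := card_pos.1 hpos
  have hfull := mem_fullPairs.1 hbπ
  -- the common point and the witnesses
  refine ⟨pmap (vert N b π 0), hpD _ (fun j => vert_mem_grid b π 0 j) , ?_⟩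
  have hdiff : ∀ (k : ℕ) (j : Fin n),
      |pmap (vert N b π k) j - pmap (vert N b π 0) j| ≤ (u j - ℓ j)/(M+1) := by
    intro k j
    have hsub : 0 ≤ vert N b π k j - vert N b π 0 j ∧
        vert N b π k j - vert N b π 0 j ≤ 1 := by
      unfold vert
      rw [if_neg (Nat.not_lt_zero _)]
      split <;> omega
    have heq : pmap (vert N b π k) j - pmap (vert N b π 0) j
        = (((vert N b π k j - vert N b π 0 j : ℤ) : ℝ)/(N:ℝ)) * (u j - ℓ j) := by
      simp only [hpmap]
      push_cast
      ring
    have hd0 : (0:ℝ) ≤ ((vert N b π k j - vert N b π 0 j : ℤ) : ℝ) := by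
      exact_mod_cast hsub.1
    have hd1 : ((vert N b π k j - vert N b π 0 j : ℤ) : ℝ) ≤ 1 := by
      exact_mod_cast hsub.2
    rw [heq, abs_of_nonneg (mul_nonneg (div_nonneg hd0 hNR.le) (by linarith [hlu j]))]
    have hNM : (N:ℝ) = (M:ℝ)+1 := by rw [hNdef]; push_cast; ring
    rw [← hNM]
    rw [div_mul_eq_mul_div, div_le_div_iff₀ hNR hNR]
    nlinarith [mul_nonneg (mul_nonneg
      (by linarith : (0:ℝ) ≤ 1 - ((vert N b π k j - vert N b π 0 j : ℤ) : ℝ))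
      (by linarith [hlu j] : (0:ℝ) ≤ u j - ℓ j)) hNR.le]
  intro i
  constructor
  · -- label i.castSucc gives an upper witness
    have hmem : (i.castSucc : Fin (n+1)) ∈
        (range (n+1)).image (fun k => lab (vert N b π k)) := by
      rw [hfull]; exact mem_univ _
    obtain ⟨k, hk, hlabk⟩ := mem_image.1 hmem
    have hGlt := hlab_eq _ i hlabk
    refine ⟨pmap (vert N b π k), hpD _ (fun j => vert_mem_grid b π k j),
      fun j => hdiff k j, ?_⟩
    have hgrid := vert_mem_grid b π k i
    have ht0 : (0:ℝ) ≤ ((vert N b π k i : ℤ) : ℝ) := by exact_mod_cast hgrid.1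
    have ht1 : ((vert N b π k i : ℤ) : ℝ) ≤ (N:ℝ) := by exact_mod_cast hgrid.2
    have hNM : (N:ℝ) = (M:ℝ)+1 := by rw [hNdef]; push_cast; ring
    simp only [hG] at hGlt
    rw [← hNM]
    have h1N : 0 < 1/(N:ℝ) := by positivity
    have hd : ((vert N b π k i : ℤ):ℝ)/(N:ℝ) ≤ 1 := (div_le_one hNR).2 ht1
    have hd2 : 0 ≤ ((vert N b π k i : ℤ):ℝ)/(N:ℝ) := div_nonneg ht0 hNR.le
    nlinarith
  · -- label last gives a lower witness
    have hmem : (Fin.last n : Fin (n+1)) ∈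
        (range (n+1)).image (fun k => lab (vert N b π k)) := by
      rw [hfull]; exact mem_univ _
    obtain ⟨k, hk, hlabk⟩ := mem_image.1 hmem
    have hGge := hlab_last _ hlabk i
    refine ⟨pmap (vert N b π k), hpD _ (fun j => vert_mem_grid b π k j),
      fun j => hdiff k j, ?_⟩
    have hgrid := vert_mem_grid b π k i
    have ht0 : (0:ℝ) ≤ ((vert N b π k i : ℤ) : ℝ) := by exact_mod_cast hgrid.1
    have ht1 : ((vert N b π k i : ℤ) : ℝ) ≤ (N:ℝ) := by exact_mod_cast hgrid.2
    have hNM : (N:ℝ) = (M:ℝ)+1 := by rw [hNdef]; push_cast; ring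
    simp only [hG] at hGge
    rw [← hNM]
    have h1N : 0 < 1/(N:ℝ) := by positivity
    have hd : ((vert N b π k i : ℤ):ℝ)/(N:ℝ) ≤ 1 := (div_le_one hNR).2 ht1
    have hd2 : 0 ≤ ((vert N b π k i : ℤ):ℝ)/(N:ℝ) := div_nonneg ht0 hNR.le
    nlinarith
end KuhnPM

open KuhnPM in
/-- box boundary-condition zero theorem, an equivalent form of Brouwer's
fixed point theorem: if each `f i` is continuous on the box `D = ∏ [ℓ i, u i]` and is
nonnegative on the lower `i`-face and nonpositive on the upper `i`-face, then the `f i`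
have a common zero in the box. -/
theorem box_boundary_zero_existence
    (n : ℕ) (ℓ u : Fin n → ℝ) (hlu : ∀ i, ℓ i ≤ u i)
    (f : Fin n → (Fin n → ℝ) → ℝ)
    (hf : ∀ i, ContinuousOn (f i) {x : Fin n → ℝ | ∀ j, x j ∈ Set.Icc (ℓ j) (u j)})
    (hlow : ∀ i, ∀ x : Fin n → ℝ, (∀ j, x j ∈ Set.Icc (ℓ j) (u j)) →
      0 ≤ f i (Function.update x i (ℓ i)))
    (hupp : ∀ i, ∀ x : Fin n → ℝ, (∀ j, x j ∈ Set.Icc (ℓ j) (u j)) →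
      f i (Function.update x i (u i)) ≤ 0) :
    ∃ x : Fin n → ℝ, (∀ j, x j ∈ Set.Icc (ℓ j) (u j)) ∧ ∀ i, f i x = 0 := by
  classical
  set S : Set (Fin n → ℝ) := {x | ∀ j, x j ∈ Set.Icc (ℓ j) (u j)} with hS
  have hScompact : IsCompact S := by
    have hSeq : S = Set.pi Set.univ (fun j => Set.Icc (ℓ j) (u j)) := by
      ext y
      simp only [hS, Set.mem_setOf_eq, Set.mem_pi, Set.mem_univ, true_implies]
    rw [hSeq]
    exact isCompact_univ_pi (fun j => isCompact_Icc)
  choose x hxD hwit using approx_step ℓ u hlu f hlow hupp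
  choose a haD hadist haf using fun M i => (hwit M i).1
  choose c hcD hcdist hcf using fun M i => (hwit M i).2
  obtain ⟨x₀, hx₀S, φ, hφmono, hφtend⟩ :=
    hScompact.tendsto_subseq (x := x) (fun M => hxD M)
  refine ⟨x₀, hx₀S, fun i => ?_⟩
  have hφat : Filter.Tendsto φ Filter.atTop Filter.atTop := hφmono.tendsto_atTop
  have heps : Filter.Tendsto (fun t : ℕ => 1/((φ t : ℝ)+1)) Filter.atTop (nhds 0) :=
    tendsto_one_div_add_atTop_nhds_zero_nat.comp hφat
  have hxj : ∀ j, Filter.Tendsto (fun t => x (φ t) j) Filter.atTop (nhds (x₀ j)) := by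
    intro j
    exact tendsto_pi_nhds.1 hφtend j
  have key : ∀ s : ℕ → Fin n → ℝ,
      (∀ t j, |s t j - x (φ t) j| ≤ (u j - ℓ j)/((φ t : ℝ)+1)) →
      Filter.Tendsto s Filter.atTop (nhds x₀) := by
    intro s hs
    rw [tendsto_pi_nhds]
    intro j
    have hdiff0 : Filter.Tendsto (fun t => s t j - x (φ t) j) Filter.atTop (nhds 0) := by
      refine squeeze_zero_norm (a := fun t => (u j - ℓ j)/((φ t : ℝ)+1)) (fun t => ?_) ?_
      · rw [Real.norm_eq_abs]
        exact hs t j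
      · have h1 : Filter.Tendsto (fun t => (u j - ℓ j) * (1/((φ t : ℝ)+1)))
            Filter.atTop (nhds ((u j - ℓ j) * 0)) := heps.const_mul _
        rw [mul_zero] at h1
        refine h1.congr (fun t => ?_)
        rw [mul_one_div]
    have := hdiff0.add (hxj j)
    rw [zero_add] at this
    refine this.congr (fun t => ?_)
    ring
  have haT : Filter.Tendsto (fun t => a (φ t) i) Filter.atTop (nhds x₀) :=
    key _ (fun t j => hadist (φ t) i j)
  have hcT : Filter.Tendsto (fun t => c (φ t) i) Filter.atTop (nhds x₀) :=
    key _ (fun t j => hcdist (φ t) i j)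
  have hfa : Filter.Tendsto (fun t => f i (a (φ t) i)) Filter.atTop (nhds (f i x₀)) := by
    have hcw : ContinuousWithinAt (f i) S x₀ := hf i x₀ hx₀S
    exact hcw.tendsto.comp (tendsto_nhdsWithin_iff.2
      ⟨haT, Filter.Eventually.of_forall (fun t => haD (φ t) i)⟩)
  have hfc : Filter.Tendsto (fun t => f i (c (φ t) i)) Filter.atTop (nhds (f i x₀)) := by
    have hcw : ContinuousWithinAt (f i) S x₀ := hf i x₀ hx₀S
    exact hcw.tendsto.comp (tendsto_nhdsWithin_iff.2
      ⟨hcT, Filter.Eventually.of_forall (fun t => hcD (φ t) i)⟩)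
  have hle : f i x₀ ≤ 0 :=
    le_of_tendsto_of_tendsto' hfa heps (fun t => haf (φ t) i)
  have hge : 0 ≤ f i x₀ := by
    have hnegeps : Filter.Tendsto (fun t : ℕ => -(1/((φ t : ℝ)+1))) Filter.atTop (nhds 0) := by
      have := heps.neg
      rwa [neg_zero] at this
    exact le_of_tendsto_of_tendsto' hnegeps hfc (fun t => hcf (φ t) i)
  linarith
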